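/- Let J(ω) be the space {x} ∪ ⋃_{n∈ω} X_n, where the X_n = {x_{ni} : i ∈ ω} are pairwise disjoint countable sets, each x_{ni} is isolated, and basic neighborhoods of x are the sets {x} ∪ ⋃_{n≥k} X_n for k ∈ ω. Then the hyperspace CL(J(ω)) with the Fell topology is not Fréchet–Urysohn: the closed set X₀ lies in the closure of the family {A_{n,i} : n ≥ 1, i ∈ ω}, where A_{n,i} = {x_{0j} : j ≤ n} ∪ {x_{ni}}, but no sequence from this family converges to X₀. -/

import Mathlib

open Set Filter Topology

/-- `CL X`: the nonempty closed subsets of `X`. -/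
abbrev CL (X : Type*) [TopologicalSpace X] := {A : Set X // A.Nonempty ∧ IsClosed A}

/-- An `ω^ω`-base of neighborhoods at a point `y` of a space with topology `t`:
a neighborhood base `{U_α : α ∈ ω^ω}` with `U_β ⊆ U_α` whenever `α ≤ β` pointwise. -/
def HasOmegaOmegaBaseAt {Y : Type*} (t : TopologicalSpace Y) (y : Y) : Prop :=
  ∃ U : (ℕ → ℕ) → Set Y, (∀ α, U α ∈ @nhds Y t y) ∧
    (∀ α β : ℕ → ℕ, α ≤ β → U β ⊆ U α) ∧
    ∀ V ∈ @nhds Y t y, ∃ α, U α ⊆ V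

/-- The Vietoris topology on `CL X`, generated by the sets `U⁺` and `U⁻` for `U` open. -/
def vietoris (X : Type*) [TopologicalSpace X] : TopologicalSpace (CL X) :=
  TopologicalSpace.generateFrom
    ({S | ∃ U : Set X, IsOpen U ∧ S = {A : CL X | (A : Set X) ⊆ U}} ∪
     {S | ∃ U : Set X, IsOpen U ∧ S = {A : CL X | ((A : Set X) ∩ U).Nonempty}})

/-- The Fell topology on `CL X`, generated by the sets `U⁻` for `U` open and
`(Kᶜ)⁺` for `K` compact. -/
def fell (X : Type*) [TopologicalSpace X] : TopologicalSpace (CL X) :=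
  TopologicalSpace.generateFrom
    ({S | ∃ U : Set X, IsOpen U ∧ S = {A : CL X | ((A : Set X) ∩ U).Nonempty}} ∪
     {S | ∃ K : Set X, IsCompact K ∧ S = {A : CL X | (A : Set X) ⊆ Kᶜ}})

/-- The space `J(ω)`: the point `none` is `x`, and `some (n, i)` is `x_{ni}`. -/
def Jspace := Option (ℕ × ℕ)

/-- Topology of `J(ω)`: every `x_{ni}` is isolated, and the basic neighborhoods of `x`
are the sets `{x} ∪ ⋃_{n ≥ k} X_n`. -/
instance : TopologicalSpace Jspace :=
  TopologicalSpace.generateFrom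
    ({S | ∃ p : ℕ × ℕ, S = {Option.some p}} ∪
     {S | ∃ k : ℕ, S = insert Option.none {q : Jspace | ∃ p : ℕ × ℕ, k ≤ p.1 ∧ q = Option.some p}})

/-- The family `{A_{n,i} : n ≥ 1, i ∈ ω}` with `A_{n,i} = {x_{0j} : j ≤ n} ∪ {x_{ni}}`. -/
def Jfamily : Set (CL Jspace) :=
  {A | ∃ n i : ℕ, 1 ≤ n ∧
    (A : Set Jspace) = {q : Jspace | ∃ j : ℕ, j ≤ n ∧ q = Option.some (0, j)} ∪ {Option.some (n, i)}}

namespace JAux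

def tail (k : ℕ) : Set Jspace :=
  insert Option.none {q : Jspace | ∃ p : ℕ × ℕ, k ≤ p.1 ∧ q = Option.some p}

lemma isOpen_singleton (p : ℕ × ℕ) : IsOpen ({Option.some p} : Set Jspace) :=
  TopologicalSpace.isOpen_generateFrom_of_mem (Or.inl ⟨p, rfl⟩)

lemma isOpen_tail (k : ℕ) : IsOpen (tail k) :=
  TopologicalSpace.isOpen_generateFrom_of_mem (Or.inr ⟨k, rfl⟩)

lemma isClosed_of_bounded (A : Set Jspace) (h0 : Option.none ∉ A) (N : ℕ)
    (hb : ∀ p : ℕ × ℕ, Option.some p ∈ A → p.1 ≤ N) : IsClosed A := by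
  rw [← isOpen_compl_iff]
  have he : Aᶜ = tail (N + 1) ∪ ⋃ p ∈ {p : ℕ × ℕ | Option.some p ∉ A}, {Option.some p} := by
    ext q
    constructor
    · intro hq
      cases q with
      | none => exact Or.inl (mem_insert _ _)
      | some p => exact Or.inr (mem_biUnion hq rfl)
    · rintro (hq | hq)
      · rcases hq with hq | ⟨p, hp, rfl⟩
        · subst hq; exact h0
        · intro hA
          exact absurd (hb p hA) (by omega)
      · simp only [mem_iUnion, mem_singleton_iff] at hq
        rcases hq with ⟨p, hp, rfl⟩
        exact hp
  rw [he]
  exact (isOpen_tail _).union (isOpen_biUnion fun p _ => isOpen_singleton p)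

lemma nhds_none_basis : (@nhds Jspace _ Option.none).HasBasis (fun _ : ℕ => True) tail := by
  have h : @nhds Jspace _ Option.none = ⨅ k : ℕ, 𝓟 (tail k) := by
    refine Eq.trans TopologicalSpace.nhds_generateFrom ?_
    apply le_antisymm
    · exact le_iInf fun k =>
        iInf₂_le (tail k) ⟨mem_insert _ _, Or.inr ⟨k, rfl⟩⟩
    · refine le_iInf₂ fun s hs => ?_
      obtain ⟨hmem, (⟨p, rfl⟩ | ⟨k, rfl⟩)⟩ := hs
      · exact absurd hmem (fun h => Option.some_ne_none _ (Eq.symm h))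
      · exact iInf_le _ k
  rw [h]
  exact Filter.hasBasis_iInf_principal
    (directed_of_isDirected_le fun a b hab => by
      intro q hq
      rcases hq with hq | ⟨p, hp, rfl⟩
      · exact Or.inl hq
      · exact Or.inr ⟨p, le_trans hab hp, rfl⟩)

lemma compact_col_finite {K : Set Jspace} (hK : IsCompact K) (n : ℕ) :
    {i : ℕ | Option.some (n, i) ∈ K}.Finite := by
  classical
  set V : Option ℕ → Set Jspace := fun o =>
    o.elim (tail (n + 1) ∪ ⋃ p ∈ {p : ℕ × ℕ | p.1 ≠ n}, {Option.some p})
      (fun i => {Option.some (n, i)}) with hV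
  have hVopen : ∀ o, IsOpen (V o) := by
    rintro (_ | i)
    · exact (isOpen_tail _).union (isOpen_biUnion fun p _ => isOpen_singleton p)
    · exact isOpen_singleton _
  have hcov : K ⊆ ⋃ o, V o := by
    intro q _
    cases q with
    | none => exact mem_iUnion.2 ⟨Option.none, Or.inl (mem_insert _ _)⟩
    | some p =>
      by_cases hp : p.1 = n
      · exact mem_iUnion.2 ⟨Option.some p.2, by simp [V, ← hp]; exact rfl⟩
      · exact mem_iUnion.2 ⟨Option.none, Or.inr (mem_biUnion hp rfl)⟩
  obtain ⟨t, ht⟩ := hK.elim_finite_subcover V hVopen hcov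
  have hsub : {i : ℕ | Option.some (n, i) ∈ K} ⊆ (fun i => (Option.some i : Option ℕ)) ⁻¹' ↑t := by
    intro i hi
    have := ht hi
    have := mem_iUnion₂.mp this
    obtain ⟨o, ho, hmem⟩ := this
    cases o with
    | none =>
      exfalso
      rcases hmem with hmem | hmem
      · rcases hmem with h | ⟨p, hp, h⟩
        · exact Option.some_ne_none _ h
        · obtain rfl : (n, i) = p := Option.some_inj.mp h
          simp at hp
      · replace hmem := mem_iUnion₂.mp hmem
        rcases hmem with ⟨p, hp, h⟩
        obtain rfl : (n, i) = p := Option.some_inj.mp h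
        exact hp rfl
    | some i' =>
      have hii : i' = i := (congrArg Prod.snd (Option.some_inj.mp hmem)).symm
      subst hii; exact ho
  exact Set.Finite.subset (t.finite_toSet.preimage (Option.some_injective ℕ).injOn) hsub


def Jsub : Set (Set (CL Jspace)) :=
  {S | ∃ U : Set Jspace, IsOpen U ∧ S = {A : CL Jspace | ((A : Set Jspace) ∩ U).Nonempty}} ∪
  {S | ∃ K : Set Jspace, IsCompact K ∧ S = {A : CL Jspace | (A : Set Jspace) ⊆ Kᶜ}}

lemma fell_nhds {S : Set (CL Jspace)} (hS : S ∈ Jsub) {A : CL Jspace} (hA : A ∈ S) :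
    S ∈ @nhds _ (fell Jspace) A := by
  letI := fell Jspace
  exact IsOpen.mem_nhds (TopologicalSpace.isOpen_generateFrom_of_mem hS) hA

lemma mem_closure_fell {s : Set (CL Jspace)} {A : CL Jspace}
    (h : ∀ F : Set (Set (CL Jspace)), F.Finite → F ⊆ Jsub → A ∈ ⋂₀ F →
      ((⋂₀ F) ∩ s).Nonempty) :
    A ∈ @closure _ (fell Jspace) s := by
  letI := fell Jspace
  have hb := TopologicalSpace.isTopologicalBasis_of_subbasis
    (α := CL Jspace) (t := fell Jspace) (s := Jsub) rfl
  refine (TopologicalSpace.IsTopologicalBasis.mem_closure_iff hb).mpr ?_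
  rintro o ⟨F, ⟨hFfin, hFsub⟩, rfl⟩ hA
  exact h F hFfin hFsub hA

def X0set : Set Jspace := {q : Jspace | ∃ j : ℕ, q = Option.some (0, j)}

lemma X0closed : IsClosed X0set := by
  rw [← isOpen_compl_iff]
  have he : X0setᶜ = tail 1 := by
    ext q
    cases q with
    | none =>
      constructor
      · intro _
        exact mem_insert _ _
      · intro _ h
        obtain ⟨j, hj⟩ := h
        exact Option.some_ne_none _ hj.symm
    | some p =>
      obtain ⟨a, b⟩ := p
      constructor
      · intro h
        refine Or.inr ⟨(a, b), ?_, rfl⟩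
        show 1 ≤ a
        rcases Nat.eq_zero_or_pos a with rfl | ha
        · exact absurd ⟨b, rfl⟩ h
        · exact ha
      · rintro (h | ⟨p', hp', h⟩) ⟨j, hj⟩
        · exact Option.some_ne_none _ h
        · have h1 : (a, b) = p' := Option.some_inj.mp h
          have h2 : a = 0 := congrArg Prod.fst (Option.some_inj.mp hj)
          rw [← h1] at hp'
          have h3 : 1 ≤ a := hp'
          omega
  rw [he]
  exact isOpen_tail 1

def X0 : CL Jspace := ⟨X0set, ⟨Option.some (0, 0), ⟨0, rfl⟩⟩, X0closed⟩

def AsetJ (n i : ℕ) : Set Jspace :=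
  {q : Jspace | ∃ j : ℕ, j ≤ n ∧ q = Option.some (0, j)} ∪ {Option.some (n, i)}

lemma key (F : Set (Set (CL Jspace))) (hF : F.Finite) :
    F ⊆ Jsub → (∀ S ∈ F, X0 ∈ S) →
    ∃ N : ℕ, ∀ n, N ≤ n → ∃ I : Set ℕ, I.Finite ∧ ∀ i ∉ I,
      ∀ A : CL Jspace, (A : Set Jspace) = AsetJ n i → ∀ S ∈ F, A ∈ S := by
  refine Set.Finite.induction_on F hF ?_ ?_
  · intro _ _
    exact ⟨0, fun n _ => ⟨∅, finite_empty, fun i _ A _ S hS => absurd hS (notMem_empty S)⟩⟩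
  · rintro S F' hnot hfin ih hsub hX
    obtain ⟨N, hN⟩ := ih (fun T hT => hsub (mem_insert_of_mem _ hT))
      (fun T hT => hX T (mem_insert_of_mem _ hT))
    have hS : S ∈ Jsub := hsub (mem_insert _ _)
    have hXS : X0 ∈ S := hX S (mem_insert _ _)
    rcases hS with ⟨U, hU, rfl⟩ | ⟨K, hK, rfl⟩
    · -- minus type
      obtain ⟨q, hqX, hqU⟩ := hXS
      obtain ⟨j, rfl⟩ := hqX
      refine ⟨max N j, fun n hn => ?_⟩
      obtain ⟨I, hIfin, hI⟩ := hN n (le_trans (le_max_left _ _) hn)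
      refine ⟨I, hIfin, fun i hi A hA T hT => ?_⟩
      rcases mem_insert_iff.mp hT with rfl | hT
      · exact ⟨Option.some (0, j),
          ⟨by rw [hA]; exact Or.inl ⟨j, le_trans (le_max_right N j) hn, rfl⟩, hqU⟩⟩
      · exact hI i hi A hA T hT
    · -- plus type
      refine ⟨N, fun n hn => ?_⟩
      obtain ⟨I, hIfin, hI⟩ := hN n hn
      refine ⟨I ∪ {i | Option.some (n, i) ∈ K}, hIfin.union (compact_col_finite hK n),
        fun i hi A hA T hT => ?_⟩
      rcases mem_insert_iff.mp hT with rfl | hT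
      · intro q hq
        rw [hA] at hq
        rcases hq with ⟨j, _, rfl⟩ | rfl
        · exact hXS ⟨j, rfl⟩
        · exact fun hK' => hi (Or.inr hK')
      · exact hI i (fun hiI => hi (Or.inl hiI)) A hA T hT

end JAux

open JAux in
theorem hyperspace_fell_J_not_frechetUrysohn :
    ∃ X0 : CL Jspace,
      (X0 : Set Jspace) = {q : Jspace | ∃ j : ℕ, q = Option.some (0, j)} ∧
      X0 ∈ @closure _ (fell Jspace) Jfamily ∧
      ¬ ∃ f : ℕ → CL Jspace, (∀ m, f m ∈ Jfamily) ∧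
          Filter.Tendsto f Filter.atTop (@nhds _ (fell Jspace) X0) := by
  refine ⟨X0, rfl, ?_, ?_⟩
  · -- X0 is in the closure of Jfamily
    refine mem_closure_fell ?_
    intro F hFfin hFsub hX0
    obtain ⟨N, hN⟩ := key F hFfin hFsub (fun S hS => hX0 S hS)
    obtain ⟨I, hIfin, hI⟩ := hN (max N 1) (le_max_left _ _)
    obtain ⟨i, hi⟩ := hIfin.infinite_compl.nonempty
    have hcl : IsClosed (AsetJ (max N 1) i) := by
      apply isClosed_of_bounded _ ?_ (max N 1)
      · rintro p (⟨j, hj, h⟩ | h)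
        · have h2 : p.1 = 0 := congrArg Prod.fst (Option.some_inj.mp h)
          omega
        · have h2 : p.1 = max N 1 := congrArg Prod.fst (Option.some_inj.mp h)
          omega
      · rintro (⟨j, hj, h⟩ | h)
        · exact Option.some_ne_none _ h.symm
        · exact Option.some_ne_none _ (Eq.symm h)
    refine ⟨⟨AsetJ (max N 1) i, ⟨Option.some (max N 1, i), Or.inr rfl⟩, hcl⟩,
      mem_sInter.mpr (hI i hi _ rfl), ⟨max N 1, i, le_max_right _ _, rfl⟩⟩
  · -- no sequence in Jfamily converges to X0
    rintro ⟨f, hmem, hconv⟩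
    simp only [Jfamily, mem_setOf_eq] at hmem
    choose nn ii h1 hset using hmem
    have stepA : ∀ j : ℕ, ∀ᶠ m in atTop, j ≤ nn m := by
      intro j
      have hSsub : {A : CL Jspace | ((A : Set Jspace) ∩ {Option.some (0, j)}).Nonempty} ∈ Jsub :=
        Or.inl ⟨{Option.some (0, j)}, isOpen_singleton _, rfl⟩
      have hXin : X0 ∈ {A : CL Jspace | ((A : Set Jspace) ∩ {Option.some (0, j)}).Nonempty} :=
        ⟨Option.some (0, j), ⟨j, rfl⟩, rfl⟩
      filter_upwards [hconv.eventually (fell_nhds hSsub hXin)] with m hm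
      obtain ⟨q, hqA, hqU⟩ := hm
      rw [hset m] at hqA
      replace hqU : q = Option.some (0, j) := hqU
      subst hqU
      rcases hqA with ⟨j', hj', h⟩ | h
      · have h2 : j = j' := congrArg Prod.snd (Option.some_inj.mp h)
        omega
      · have h2 : (0 : ℕ) = nn m := congrArg Prod.fst (Option.some_inj.mp h)
        have := h1 m
        omega
    set g : ℕ → Jspace := fun m => Option.some (nn m, ii m) with hgdef
    have hg : Tendsto g atTop (@nhds Jspace _ Option.none) := by
      rw [nhds_none_basis.tendsto_right_iff]
      intro k _
      filter_upwards [stepA k] with m hm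
      exact Or.inr ⟨(nn m, ii m), hm, rfl⟩
    have hKcomp : IsCompact (insert (Option.none : Jspace) (Set.range g)) :=
      hg.isCompact_insert_range
    have hXK : (X0 : Set Jspace) ⊆ (insert (Option.none : Jspace) (Set.range g))ᶜ := by
      rintro q ⟨j, rfl⟩ hqK
      rcases hqK with h | ⟨m, h⟩
      · exact Option.some_ne_none _ h
      · have h2 : nn m = 0 := congrArg Prod.fst (Option.some_inj.mp h)
        have := h1 m
        omega
    have hSsub : {A : CL Jspace |
        (A : Set Jspace) ⊆ (insert (Option.none : Jspace) (Set.range g))ᶜ} ∈ Jsub :=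
      Or.inr ⟨_, hKcomp, rfl⟩
    obtain ⟨m, hm⟩ := (hconv.eventually (fell_nhds hSsub hXK)).exists
    exact hm (by rw [hset m]; exact Or.inr rfl) (mem_insert_iff.mpr (Or.inr ⟨m, rfl⟩))
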